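/- If the random shortcut configuration on the directed n-cycle is chosen from a translation-invariant distribution, then the hitting probability h(x) of greedy routing to vertex 0 is non-increasing in x for 1 ≤ x ≤ n-1. -/

import Mathlib

open Finset
open scoped Classical

/-- One greedy routing step toward destination `0` on the directed `n`-cycle with
shortcut configuration `E`: from `v ≠ 0` move to whichever of the shortcut endpoint
`E v` and the base-edge successor `v - 1` is closer to `0` (never overshooting). -/
def gstep (n : ℕ) [NeZero n] (E : ZMod n → ZMod n) (v : ZMod n) : ZMod n :=
  if v = 0 then 0 else if (E v).val < (v - 1).val then E v else v - 1

/-- The greedy walk from `y` toward `0` passes through `x`. -/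
def hits (n : ℕ) [NeZero n] (E : ZMod n → ZMod n) (y x : ZMod n) : Prop :=
  ∃ t ≤ n, (gstep n E)^[t] y = x

/-- Hitting probability of `x` for a query to `0` from a uniform start, when the shortcut
configuration is drawn with probability weights `w`. -/
noncomputable def hitProb (n : ℕ) [NeZero n] (w : (ZMod n → ZMod n) → ℝ)
    (x : ZMod n) : ℝ :=
  ∑ E : ZMod n → ZMod n, w E *
    ((∑ y : ZMod n, if hits n E y x then (1 : ℝ) else 0) / n)

section aux

variable {n : ℕ} [NeZero n]

lemma val_sub_one' {v : ZMod n} (hv : v ≠ 0) : (v - 1).val = v.val - 1 := by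
  have h1 : 1 ≤ v.val := Nat.one_le_iff_ne_zero.mpr (by simpa [ZMod.val_eq_zero] using hv)
  have hlt : v.val - 1 < n := lt_of_le_of_lt (Nat.sub_le _ _) (ZMod.val_lt v)
  have hv' : v - 1 = ((v.val - 1 : ℕ) : ZMod n) := by
    rw [Nat.cast_sub h1]
    simp [ZMod.natCast_val, ZMod.cast_id]
  rw [hv', ZMod.val_cast_of_lt hlt]

lemma ne_zero_of_two_le_val {v : ZMod n} (hv : 2 ≤ v.val) : v ≠ 0 := by
  intro h; rw [h, ZMod.val_zero] at hv; omega

/-- The shifted configuration (translation by `-1`). -/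
def shiftE (E : ZMod n → ZMod n) : ZMod n → ZMod n := fun v => E (v + 1) - 1

lemma gstep_shift (E : ZMod n → ZMod n) {v : ZMod n} (hv2 : 2 ≤ v.val)
    (hout : gstep n E v ≠ 0) :
    gstep n (shiftE E) (v - 1) = gstep n E v - 1 := by
  have hv0 : v ≠ 0 := ne_zero_of_two_le_val hv2
  have hvm1 : (v - 1).val = v.val - 1 := val_sub_one' hv0
  have hv1ne : v - 1 ≠ 0 := by
    intro h
    rw [h, ZMod.val_zero] at hvm1; omega
  have hvm2 : (v - 1 - 1).val = v.val - 2 := by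
    rw [val_sub_one' hv1ne, hvm1]; omega
  have hse : shiftE E (v - 1) = E v - 1 := by simp [shiftE]
  rw [gstep, if_neg hv1ne, hse, hvm2]
  by_cases hc : (E v).val < (v - 1).val
  · have hEv : gstep n E v = E v := by rw [gstep, if_neg hv0, if_pos hc]
    have hE0 : E v ≠ 0 := by rw [hEv] at hout; exact hout
    have hE1 : 1 ≤ (E v).val := Nat.one_le_iff_ne_zero.mpr
      (by simpa [ZMod.val_eq_zero] using hE0)
    have hEm1 : (E v - 1).val = (E v).val - 1 := val_sub_one' hE0
    rw [hvm1] at hc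
    rw [hEm1, hEv, if_pos (by omega)]
  · have hE1 : 1 ≤ (E v).val := by rw [hvm1] at hc; omega
    have hE0 : E v ≠ 0 := by
      intro h; rw [h, ZMod.val_zero] at hE1; omega
    have hEm1 : (E v - 1).val = (E v).val - 1 := val_sub_one' hE0
    have hEv : gstep n E v = v - 1 := by rw [gstep, if_neg hv0, if_neg hc]
    rw [hvm1] at hc
    rw [hEm1, hEv, if_neg (by omega)]

lemma gstep_zero (E : ZMod n → ZMod n) : gstep n E 0 = 0 := by simp [gstep]

lemma iterate_gstep_zero (E : ZMod n → ZMod n) (t : ℕ) : (gstep n E)^[t] 0 = 0 :=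
  Function.iterate_fixed (gstep_zero E) t

/-- Equivariance of reaching, away from `0`. -/
lemma reach_shift (E : ZMod n → ZMod n) {z : ZMod n} (hz : 2 ≤ z.val) :
    ∀ t y, (gstep n E)^[t] y = z →
      ∃ s ≤ t, (gstep n (shiftE E))^[s] (y - 1) = z - 1 := by
  intro t
  induction t with
  | zero => intro y h; exact ⟨0, le_refl 0, by simp_all⟩
  | succ t ih =>
    intro y h
    by_cases hyz : y = z
    · exact ⟨0, Nat.zero_le _, by rw [hyz]; simp⟩
    · have hy0 : y ≠ 0 := by
        intro h0
        rw [h0, iterate_gstep_zero] at h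
        exact ne_zero_of_two_le_val hz h.symm
      rw [Function.iterate_succ_apply] at h
      have hg0 : gstep n E y ≠ 0 := by
        intro h0
        rw [h0, iterate_gstep_zero] at h
        exact ne_zero_of_two_le_val hz h.symm
      have hym : (y - 1).val = y.val - 1 := val_sub_one' hy0
      have hy1 : 1 ≤ y.val := Nat.one_le_iff_ne_zero.mpr
        (by simpa [ZMod.val_eq_zero] using hy0)
      have hy2 : 2 ≤ y.val := by
        by_contra hlt
        have hym0 : (y - 1).val = 0 := by omega
        have hy10 : y - 1 = 0 := (ZMod.val_eq_zero _).mp hym0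
        apply hg0
        rw [gstep, if_neg hy0, if_neg (by rw [hym0]; omega), hy10]
      have hstep := gstep_shift E hy2 hg0
      obtain ⟨s, hs, hs'⟩ := ih (gstep n E y) h
      exact ⟨s + 1, by omega, by rw [Function.iterate_succ_apply, hstep, hs']⟩

lemma hits_shift (E : ZMod n → ZMod n) {z y : ZMod n} (hz : 2 ≤ z.val)
    (h : hits n E y z) : hits n (shiftE E) (y - 1) (z - 1) := by
  obtain ⟨t, ht, hty⟩ := h
  obtain ⟨s, hs, hs'⟩ := reach_shift E hz t y hty
  exact ⟨s, le_trans hs ht, hs'⟩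

/-- `shiftE` as an equivalence on configurations. -/
def shiftEquiv' : (ZMod n → ZMod n) ≃ (ZMod n → ZMod n) where
  toFun := shiftE
  invFun := fun E v => E (v - 1) + 1
  left_inv := fun E => by funext v; simp [shiftE]
  right_inv := fun E => by funext v; simp [shiftE]

end aux

theorem hitProb_nonincreasing (n : ℕ) [NeZero n] (hn : 2 ≤ n)
    (w : (ZMod n → ZMod n) → ℝ)
    (hw0 : ∀ E, 0 ≤ w E) (hw1 : ∑ E : ZMod n → ZMod n, w E = 1)
    (hinv : ∀ E : ZMod n → ZMod n, w (fun x => E (x - 1) + 1) = w E) :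
    ∀ x : ℕ, 1 ≤ x → x + 1 ≤ n - 1 →
      hitProb n w ((x + 1 : ℕ) : ZMod n) ≤ hitProb n w ((x : ℕ) : ZMod n) := by
  intro x hx1 hxn
  have hxlt : x + 1 < n := by omega
  have hvalx1 : ((x + 1 : ℕ) : ZMod n).val = x + 1 := ZMod.val_cast_of_lt hxlt
  have hz2 : 2 ≤ ((x + 1 : ℕ) : ZMod n).val := by omega
  have hsub : ((x + 1 : ℕ) : ZMod n) - 1 = ((x : ℕ) : ZMod n) := by
    push_cast; ring
  -- invariance of the weight under shiftE
  have hwshift : ∀ E, w (shiftE E) = w E := by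
    intro E
    have := hinv (shiftE E)
    have heq : (fun v => shiftE E (v - 1) + 1) = E := by
      funext v; simp [shiftE]
    rw [heq] at this
    exact this.symm
  -- termwise inequality of the inner counts
  have hcount : ∀ E : ZMod n → ZMod n,
      (∑ y : ZMod n, if hits n E y ((x + 1 : ℕ) : ZMod n) then (1 : ℝ) else 0) ≤
      (∑ y : ZMod n, if hits n (shiftE E) y ((x : ℕ) : ZMod n) then (1 : ℝ) else 0) := by
    intro E
    rw [← Equiv.sum_comp (Equiv.subRight (1 : ZMod n))
      (fun y => if hits n (shiftE E) y ((x : ℕ) : ZMod n) then (1 : ℝ) else 0)]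
    apply Finset.sum_le_sum
    intro y _
    by_cases h : hits n E y ((x + 1 : ℕ) : ZMod n)
    · have hthis := hits_shift E hz2 h
      rw [hsub] at hthis
      simp only [Equiv.subRight_apply]
      rw [if_pos h, if_pos hthis]
    · rw [if_neg h]
      split <;> norm_num
  calc hitProb n w ((x + 1 : ℕ) : ZMod n)
      ≤ ∑ E : ZMod n → ZMod n, w E *
          ((∑ y : ZMod n, if hits n (shiftE E) y ((x : ℕ) : ZMod n) then (1 : ℝ) else 0) / n) := by
        apply Finset.sum_le_sum
        intro E _
        apply mul_le_mul_of_nonneg_left _ (hw0 E)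
        have hn0 : (0:ℝ) < n := by
          have := Nat.pos_of_ne_zero (NeZero.ne n)
          exact_mod_cast this
        exact div_le_div_of_nonneg_right (hcount E) hn0.le
    _ = hitProb n w ((x : ℕ) : ZMod n) := by
        unfold hitProb
        rw [← Equiv.sum_comp (shiftEquiv' (n := n))
          (fun E => w E * ((∑ y : ZMod n, if hits n E y ((x : ℕ) : ZMod n) then (1 : ℝ) else 0) / n))]
        apply Finset.sum_congr rfl
        intro E _
        simp only [shiftEquiv', Equiv.coe_fn_mk, hwshift]
        rfl
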